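/- Let F : R^N → R^N be μ-strongly monotone and θ₀-Lipschitz, and let 𝐅 : R^{N²} → R^N be θ-Lipschitz with 𝐅(1_N ⊗ x) = F(x). Let R be the block selection matrix with ‖R‖₂ = 1, L the Laplacian of a connected graph, 𝐋 = L ⊗ I_N, and Ψ the 2×2 matrix [[μ/N, -(θ+θ₀)/(2√N)], [-(θ+θ₀)/(2√N), c₀λ₂(L) - θ]]. Then for any 𝐱 ∈ R^{N²} and any 𝐲 ∈ Ker(𝐋), (𝐱-𝐲)ᵀ(R𝐅(𝐱) - R𝐅(𝐲) + c₀𝐋(𝐱-𝐲)) ≥ λ_min(Ψ)‖𝐱-𝐲‖². -/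

import Mathlib

open Matrix RealInnerProductSpace

section
variable {n : Type*} [Fintype n] [DecidableEq n]

private lemma dot_sum_smul (v c : n → ℝ) (u : n → n → ℝ) :
    v ⬝ᵥ (∑ i, c i • u i) = ∑ i, c i * (u i ⬝ᵥ v) := by
  simp only [dotProduct, Finset.sum_apply, Pi.smul_apply, smul_eq_mul, Finset.mul_sum]
  rw [Finset.sum_comm]
  exact Finset.sum_congr rfl fun i _ => Finset.sum_congr rfl fun j _ => by ring

variable {A : Matrix n n ℝ} (hA : A.IsHermitian)

private lemma basis_expand (v : n → ℝ) :
    v = ∑ i, (⇑(hA.eigenvectorBasis i) ⬝ᵥ v) • ⇑(hA.eigenvectorBasis i) := by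
  have h := hA.eigenvectorBasis.sum_repr' (WithLp.toLp 2 v : EuclideanSpace ℝ n)
  have h2 : ∀ i, ⟪hA.eigenvectorBasis i, (WithLp.toLp 2 v : EuclideanSpace ℝ n)⟫
      = ⇑(hA.eigenvectorBasis i) ⬝ᵥ v := fun i => by
    simp [PiLp.inner_apply, dotProduct, RCLike.inner_apply, mul_comm]
  simp_rw [h2] at h
  have h3 := congrArg WithLp.ofLp h
  simp only [WithLp.ofLp_sum, WithLp.ofLp_smul] at h3
  exact h3.symm

private lemma dot_eq_sum_mul (v w : n → ℝ) :
    v ⬝ᵥ w = ∑ i, (⇑(hA.eigenvectorBasis i) ⬝ᵥ v) * (⇑(hA.eigenvectorBasis i) ⬝ᵥ w) := by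
  conv_lhs => rw [basis_expand hA w, dot_sum_smul]
  exact Finset.sum_congr rfl fun i _ => by rw [dotProduct_comm]; ring

private lemma dot_mulVec_eq_sum_sq (v : n → ℝ) :
    v ⬝ᵥ (A *ᵥ v) = ∑ i, hA.eigenvalues i * (⇑(hA.eigenvectorBasis i) ⬝ᵥ v)^2 := by
  rw [dot_eq_sum_mul hA]
  refine Finset.sum_congr rfl fun i _ => ?_
  have h1 : ⇑(hA.eigenvectorBasis i) ⬝ᵥ (A *ᵥ v)
      = (A *ᵥ ⇑(hA.eigenvectorBasis i)) ⬝ᵥ v := by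
    rw [dotProduct_mulVec, ← mulVec_transpose,
      show Aᵀ = A from by rw [← conjTranspose_eq_transpose_of_trivial]; exact hA]
  rw [h1, hA.mulVec_eigenvectorBasis, smul_dotProduct, smul_eq_mul]; ring

private lemma rayleigh_lower [Nonempty n] (v : n → ℝ) :
    (⨅ i, hA.eigenvalues i) * (v ⬝ᵥ v) ≤ v ⬝ᵥ (A *ᵥ v) := by
  rw [dot_mulVec_eq_sum_sq hA, dot_eq_sum_mul hA v v, Finset.mul_sum]
  refine Finset.sum_le_sum fun i _ => ?_
  have h1 : (⨅ j, hA.eigenvalues j) ≤ hA.eigenvalues i :=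
    ciInf_le (Finite.bddBelow_range _) i
  nlinarith [mul_self_nonneg (⇑(hA.eigenvectorBasis i) ⬝ᵥ v)]

end

private lemma lam2_bound {N : ℕ} (hN : 0 < N) (G : SimpleGraph (Fin N)) [DecidableRel G.Adj]
    (hconn : G.Connected) (hL : (G.lapMatrix ℝ).IsHermitian) (lam2 : ℝ)
    (hmin : ∀ i, hL.eigenvalues i ≠ 0 → lam2 ≤ hL.eigenvalues i)
    (v : Fin N → ℝ) (hv : ∑ j, v j = 0) :
    lam2 * (v ⬝ᵥ v) ≤ v ⬝ᵥ (G.lapMatrix ℝ *ᵥ v) := by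
  rw [dot_mulVec_eq_sum_sq hL, dot_eq_sum_mul hL v v, Finset.mul_sum]
  refine Finset.sum_le_sum fun i _ => ?_
  by_cases h0 : hL.eigenvalues i = 0
  · have hker : Matrix.toLin' (G.lapMatrix ℝ) ⇑(hL.eigenvectorBasis i) = 0 := by
      rw [Matrix.toLin'_apply, hL.mulVec_eigenvectorBasis, h0, zero_smul]
    have hconst := (G.lapMatrix_mulVec_eq_zero_iff_forall_reachable
      (x := ⇑(hL.eigenvectorBasis i))).mp ((Matrix.toLin'_apply _ _).symm.trans hker)
    have hc : ⇑(hL.eigenvectorBasis i) ⬝ᵥ v = 0 := by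
      have : ∀ j, (⇑(hL.eigenvectorBasis i)) j = (⇑(hL.eigenvectorBasis i)) ⟨0, hN⟩ :=
        fun j => hconst j ⟨0, hN⟩ (hconn j ⟨0, hN⟩)
      calc ⇑(hL.eigenvectorBasis i) ⬝ᵥ v
          = ∑ j, (⇑(hL.eigenvectorBasis i)) ⟨0, hN⟩ * v j := by
            exact Finset.sum_congr rfl fun j _ => by rw [this j]
        _ = (⇑(hL.eigenvectorBasis i)) ⟨0, hN⟩ * ∑ j, v j := by rw [Finset.mul_sum]
        _ = 0 := by rw [hv, mul_zero]
    rw [hc]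
    simp
  · nlinarith [hmin i h0, mul_self_nonneg (⇑(hL.eigenvectorBasis i) ⬝ᵥ v)]


private lemma dot_self_nonneg' {n : Type*} [Fintype n] (v : n → ℝ) : 0 ≤ v ⬝ᵥ v :=
  Finset.sum_nonneg fun _ _ => mul_self_nonneg _

private lemma abs_dot_le' {n : Type*} [Fintype n] (a b : n → ℝ) :
    |a ⬝ᵥ b| ≤ Real.sqrt (a ⬝ᵥ a) * Real.sqrt (b ⬝ᵥ b) := by
  have h := Finset.sum_mul_sq_le_sq_mul_sq Finset.univ a b
  have : |a ⬝ᵥ b| = Real.sqrt ((a ⬝ᵥ b)^2) := (Real.sqrt_sq_eq_abs _).symm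
  rw [this, ← Real.sqrt_mul (dot_self_nonneg' a)]
  apply Real.sqrt_le_sqrt
  simpa [dotProduct, pow_two, Finset.mul_sum] using h

open Matrix Kronecker

set_option maxHeartbeats 1000000 in
/-- Restricted strong monotonicity of `x ↦ R𝐅(x) + c₀𝐋x` (Lemma 2 of the paper):
if `F` is `μ`-strongly monotone and `θ₀`-Lipschitz, the extended pseudo-gradient `𝐅` is
`θ`-Lipschitz and agrees with `F` on the consensus subspace, `lam2 = λ₂(L)` is the smallest
nonzero eigenvalue of the Laplacian of the connected communication graph, and
`Ψ = [[μ/N, -(θ+θ₀)/(2√N)], [-(θ+θ₀)/(2√N), c₀λ₂(L) - θ]]`, then for any `𝐱` and any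
`𝐲 ∈ Ker 𝐋`, `(𝐱-𝐲)ᵀ(R𝐅(𝐱) - R𝐅(𝐲) + c₀𝐋(𝐱-𝐲)) ≥ λ_min(Ψ)‖𝐱-𝐲‖²`. -/
theorem restricted_strong_monotonicity (N : ℕ) (hN : 0 < N)
    (μ θ θ₀ c₀ : ℝ) (hμ : 0 < μ) (hθ : 0 < θ) (hθ₀ : 0 < θ₀) (hc₀ : 0 < c₀)
    (F : (Fin N → ℝ) → (Fin N → ℝ))
    (hmono : ∀ x y : Fin N → ℝ, μ * ((x - y) ⬝ᵥ (x - y)) ≤ (x - y) ⬝ᵥ (F x - F y))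
    (hFlip : ∀ x y : Fin N → ℝ,
      Real.sqrt ((F x - F y) ⬝ᵥ (F x - F y)) ≤ θ₀ * Real.sqrt ((x - y) ⬝ᵥ (x - y)))
    (bF : (Fin N × Fin N → ℝ) → (Fin N → ℝ))
    (hbFlip : ∀ xx yy : Fin N × Fin N → ℝ,
      Real.sqrt ((bF xx - bF yy) ⬝ᵥ (bF xx - bF yy)) ≤
        θ * Real.sqrt ((xx - yy) ⬝ᵥ (xx - yy)))
    (hconsist : ∀ x : Fin N → ℝ, bF (fun p => x p.2) = F x)
    (R : Matrix (Fin N × Fin N) (Fin N) ℝ)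
    (hR : R = Matrix.of fun p k => if p.1 = k ∧ p.2 = k then (1 : ℝ) else 0)
    (G : SimpleGraph (Fin N)) [DecidableRel G.Adj] (hconn : G.Connected)
    (hL : (G.lapMatrix ℝ).IsHermitian) (lam2 : ℝ)
    (hmem : ∃ i, hL.eigenvalues i = lam2) (hlam2 : lam2 ≠ 0)
    (hmin : ∀ i, hL.eigenvalues i ≠ 0 → lam2 ≤ hL.eigenvalues i)
    (Ψ : Matrix (Fin 2) (Fin 2) ℝ)
    (hΨ : Ψ = !![μ / N, -(θ + θ₀) / (2 * Real.sqrt N);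
                 -(θ + θ₀) / (2 * Real.sqrt N), c₀ * lam2 - θ])
    (hΨh : Ψ.IsHermitian) :
    ∀ xx yy : Fin N × Fin N → ℝ,
      ((G.lapMatrix ℝ) ⊗ₖ (1 : Matrix (Fin N) (Fin N) ℝ)) *ᵥ yy = 0 →
        (⨅ i, hΨh.eigenvalues i) * ((xx - yy) ⬝ᵥ (xx - yy)) ≤
          (xx - yy) ⬝ᵥ (R *ᵥ (bF xx) - R *ᵥ (bF yy) +
            c₀ • (((G.lapMatrix ℝ) ⊗ₖ (1 : Matrix (Fin N) (Fin N) ℝ)) *ᵥ (xx - yy))) := by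
  intro xx yy hker
  have hNR : (0:ℝ) < N := by exact_mod_cast hN
  set bL := (G.lapMatrix ℝ) ⊗ₖ (1 : Matrix (Fin N) (Fin N) ℝ) with hbL
  -- entrywise formula for bL *ᵥ
  have hbLmv : ∀ (v : Fin N × Fin N → ℝ) (p : Fin N × Fin N),
      (bL *ᵥ v) p = ∑ k, G.lapMatrix ℝ p.1 k * v (k, p.2) := by
    intro v p
    rw [hbL]
    simp [Matrix.mulVec, dotProduct, Fintype.sum_prod_type, Matrix.one_apply,
      Matrix.kroneckerMap_apply, mul_ite, ite_mul, mul_zero, zero_mul, mul_one]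
  -- yy is a consensus vector
  obtain ⟨w, hyy⟩ : ∃ w : Fin N → ℝ, yy = fun p => w p.2 := by
    refine ⟨fun j => yy (⟨0, hN⟩, j), ?_⟩
    funext p
    have hcol : Matrix.toLin' (G.lapMatrix ℝ) (fun k => yy (k, p.2)) = 0 := by
      rw [Matrix.toLin'_apply]
      funext i
      have h := congrFun hker (i, p.2)
      rw [hbLmv yy (i, p.2)] at h
      exact h
    have hreach := (G.lapMatrix_mulVec_eq_zero_iff_forall_reachable
      (x := fun k => yy (k, p.2))).mp ((Matrix.toLin'_apply _ _).symm.trans hcol)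
    exact hreach p.1 ⟨0, hN⟩ (hconn p.1 ⟨0, hN⟩)
  -- decomposition
  set xbar : Fin N → ℝ := fun j => (∑ k, xx (k, j)) / N with hxbar
  set z : Fin N × Fin N → ℝ := xx - yy with hzdef
  set zp : Fin N × Fin N → ℝ := fun p => xbar p.2 - w p.2 with hzp
  set zo : Fin N × Fin N → ℝ := z - zp with hzo
  have hzsplit : z = zp + zo := by rw [hzo]; abel
  have hcolsum : ∀ j, ∑ k, zo (k, j) = 0 := by
    intro j
    have : ∀ k : Fin N, zo (k, j) = xx (k, j) - w j - (xbar j - w j) := by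
      intro k; simp [hzo, hzdef, hyy, hzp]
    rw [Finset.sum_congr rfl fun k _ => this k]
    simp [Finset.sum_sub_distrib, hxbar]
    field_simp
    ring
  have horth : zp ⬝ᵥ zo = 0 := by
    have h : zp ⬝ᵥ zo = ∑ j, (xbar j - w j) * ∑ k, zo (k, j) := by
      rw [dotProduct, Fintype.sum_prod_type, Finset.sum_comm]
      exact Finset.sum_congr rfl fun j _ => by rw [Finset.mul_sum]
    rw [h]
    simp [hcolsum]
  have hpyth : z ⬝ᵥ z = zp ⬝ᵥ zp + zo ⬝ᵥ zo := by
    rw [hzsplit]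
    simp only [add_dotProduct, dotProduct_add]
    rw [dotProduct_comm zo zp, horth]
    ring
  have hApar : zp ⬝ᵥ zp = N * ((xbar - w) ⬝ᵥ (xbar - w)) := by
    rw [dotProduct, Fintype.sum_prod_type]
    have h : ∀ k : Fin N, (∑ j, zp (k, j) * zp (k, j)) = (xbar - w) ⬝ᵥ (xbar - w) :=
      fun k => rfl
    rw [Finset.sum_congr rfl fun k _ => h k, Finset.sum_const, Finset.card_univ,
      Fintype.card_fin, nsmul_eq_mul]
  -- Laplacian quadratic form bound
  have hLzp : bL *ᵥ zp = 0 := by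
    funext p
    rw [hbLmv]
    have hrow := congrFun (G.lapMatrix_mulVec_const_eq_zero (R := ℝ)) p.1
    simp only [Matrix.mulVec, dotProduct, mul_one, Pi.zero_apply] at hrow
    show (∑ k, G.lapMatrix ℝ p.1 k * (xbar p.2 - w p.2)) = (0 : ℝ)
    rw [← Finset.sum_mul, hrow, zero_mul]
  have hsym : bLᵀ = bL := by
    rw [hbL, ← Matrix.kroneckerMap_transpose]
    rw [(G.isSymm_lapMatrix (R := ℝ)).eq, Matrix.transpose_one]
  have hquad : lam2 * (zo ⬝ᵥ zo) ≤ z ⬝ᵥ (bL *ᵥ z) := by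
    have h1 : bL *ᵥ z = bL *ᵥ zo := by
      rw [hzsplit, Matrix.mulVec_add, hLzp, zero_add]
    have h2 : zp ⬝ᵥ (bL *ᵥ zo) = 0 := by
      rw [dotProduct_mulVec, ← Matrix.mulVec_transpose, hsym, hLzp, zero_dotProduct]
    have h3 : zo ⬝ᵥ (bL *ᵥ zo) = ∑ j, (fun k => zo (k, j)) ⬝ᵥ (G.lapMatrix ℝ *ᵥ fun k => zo (k, j)) := by
      rw [dotProduct, Fintype.sum_prod_type, Finset.sum_comm]
      refine Finset.sum_congr rfl fun j _ => Finset.sum_congr rfl fun k _ => ?_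
      rw [hbLmv zo (k, j)]
      rfl
    have h4 : ∀ j, lam2 * ((fun k => zo (k, j)) ⬝ᵥ (fun k => zo (k, j)))
        ≤ (fun k => zo (k, j)) ⬝ᵥ (G.lapMatrix ℝ *ᵥ fun k => zo (k, j)) :=
      fun j => lam2_bound hN G hconn hL lam2 hmin _ (hcolsum j)
    have h5 : zo ⬝ᵥ zo = ∑ j, (fun k => zo (k, j)) ⬝ᵥ (fun k => zo (k, j)) := by
      rw [dotProduct, Fintype.sum_prod_type, Finset.sum_comm]
      rfl
    calc lam2 * (zo ⬝ᵥ zo) = ∑ j, lam2 * ((fun k => zo (k, j)) ⬝ᵥ (fun k => zo (k, j))) := by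
          rw [h5, Finset.mul_sum]
      _ ≤ ∑ j, (fun k => zo (k, j)) ⬝ᵥ (G.lapMatrix ℝ *ᵥ fun k => zo (k, j)) :=
          Finset.sum_le_sum fun j _ => h4 j
      _ = zo ⬝ᵥ (bL *ᵥ zo) := h3.symm
      _ = z ⬝ᵥ (bL *ᵥ z) := by
          rw [h1, hzsplit, add_dotProduct, h2, zero_add]
  -- selection matrix facts
  have hdR : ∀ (v : Fin N × Fin N → ℝ) (u : Fin N → ℝ),
      v ⬝ᵥ (R *ᵥ u) = (fun k => v (k, k)) ⬝ᵥ u := by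
    intro v u
    rw [hR]
    simp only [Matrix.mulVec, dotProduct, Matrix.of_apply, ite_and, ite_mul, one_mul,
      zero_mul, Finset.sum_ite_eq, Finset.mem_univ, if_true, Fintype.sum_prod_type]
    rw [Finset.sum_comm]
    refine Finset.sum_congr rfl fun k _ => ?_
    simp [mul_ite, mul_zero, Finset.sum_ite_eq]
  have hdnorm : ∀ v : Fin N × Fin N → ℝ,
      (fun k => v (k, k)) ⬝ᵥ (fun k => v (k, k)) ≤ v ⬝ᵥ v := by
    intro v
    rw [dotProduct, dotProduct, Fintype.sum_prod_type]
    exact Finset.sum_le_sum fun k _ => Finset.single_le_sum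
      (f := fun j => v (k, j) * v (k, j)) (fun j _ => mul_self_nonneg _) (Finset.mem_univ k)
  -- norms
  set a := Real.sqrt (zp ⬝ᵥ zp) with ha
  set b := Real.sqrt (zo ⬝ᵥ zo) with hb
  set s := Real.sqrt N with hs
  have hs0 : 0 < s := Real.sqrt_pos.mpr hNR
  have ha0 : 0 ≤ a := Real.sqrt_nonneg _
  have hb0 : 0 ≤ b := Real.sqrt_nonneg _
  have ha2 : zp ⬝ᵥ zp = a ^ 2 := (Real.sq_sqrt (dot_self_nonneg' _)).symm
  have hb2 : zo ⬝ᵥ zo = b ^ 2 := (Real.sq_sqrt (dot_self_nonneg' _)).symm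
  have hxw : Real.sqrt ((xbar - w) ⬝ᵥ (xbar - w)) = a / s := by
    have h : a = s * Real.sqrt ((xbar - w) ⬝ᵥ (xbar - w)) := by
      rw [ha, hApar, Real.sqrt_mul hNR.le, hs]
    rw [h]
    field_simp
  have hxw2 : (xbar - w) ⬝ᵥ (xbar - w) = (a / s) ^ 2 := by
    rw [← hxw, Real.sq_sqrt (dot_self_nonneg' _)]
  -- F-term decomposition
  set xc : Fin N × Fin N → ℝ := fun p => xbar p.2 with hxc
  have hxxc : xx - xc = zo := by
    funext p
    show xx p - xbar p.2 = (xx - yy) p - zp p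
    simp only [Pi.sub_apply, hyy, hzp]
    ring
  have hbFyy : bF yy = F w := by rw [hyy]; exact hconsist w
  have hbFxc : bF xc = F xbar := hconsist xbar
  set FS := F xbar - F w with hFS
  set FB := bF xx - bF xc with hFB
  set dzo : Fin N → ℝ := fun k => zo (k, k) with hdzo
  have hdzp : (fun k => zp (k, k)) = xbar - w := by funext k; simp [hzp]
  -- four bounds
  have hB1 : μ * ((a / s) ^ 2) ≤ (xbar - w) ⬝ᵥ FS := by
    rw [← hxw2]; exact hmono xbar w
  have hdzonorm : Real.sqrt (dzo ⬝ᵥ dzo) ≤ b := by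
    rw [hb]; exact Real.sqrt_le_sqrt (hdnorm zo)
  have hFSnorm : Real.sqrt (FS ⬝ᵥ FS) ≤ θ₀ * (a / s) := by
    rw [← hxw]; exact hFlip xbar w
  have hFBnorm : Real.sqrt (FB ⬝ᵥ FB) ≤ θ * b := by
    have h := hbFlip xx xc
    rw [hxxc, ← hb] at h
    exact h
  have hB2 : -(b * (θ₀ * (a / s))) ≤ dzo ⬝ᵥ FS := by
    have h := abs_dot_le' dzo FS
    have h2 : Real.sqrt (dzo ⬝ᵥ dzo) * Real.sqrt (FS ⬝ᵥ FS) ≤ b * (θ₀ * (a / s)) :=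
      mul_le_mul hdzonorm hFSnorm (Real.sqrt_nonneg _) hb0
    have h3 := neg_abs_le (dzo ⬝ᵥ FS)
    linarith [abs_nonneg (dzo ⬝ᵥ FS)]
  have hB3 : -((a / s) * (θ * b)) ≤ (xbar - w) ⬝ᵥ FB := by
    have h := abs_dot_le' (xbar - w) FB
    rw [hxw] at h
    have h2 : (a / s) * Real.sqrt (FB ⬝ᵥ FB) ≤ (a / s) * (θ * b) :=
      mul_le_mul_of_nonneg_left hFBnorm (div_nonneg ha0 hs0.le)
    have h3 := neg_abs_le ((xbar - w) ⬝ᵥ FB)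
    linarith
  have hB4 : -(b * (θ * b)) ≤ dzo ⬝ᵥ FB := by
    have h := abs_dot_le' dzo FB
    have h2 : Real.sqrt (dzo ⬝ᵥ dzo) * Real.sqrt (FB ⬝ᵥ FB) ≤ b * (θ * b) :=
      mul_le_mul hdzonorm hFBnorm (Real.sqrt_nonneg _) hb0
    have h3 := neg_abs_le (dzo ⬝ᵥ FB)
    linarith
  -- Rayleigh bound on Ψ
  have hray : (⨅ i, hΨh.eigenvalues i) * (a ^ 2 + b ^ 2) ≤
      (μ / N) * a ^ 2 - ((θ + θ₀) / s) * (a * b) + (c₀ * lam2 - θ) * b ^ 2 := by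
    have h := rayleigh_lower hΨh ![a, b]
    have hv1 : (![a, b] ⬝ᵥ ![a, b]) = a ^ 2 + b ^ 2 := by
      simp [dotProduct, Fin.sum_univ_two]
      ring
    have hv2 : ![a, b] ⬝ᵥ (Ψ *ᵥ ![a, b]) =
        (μ / N) * a ^ 2 - ((θ + θ₀) / s) * (a * b) + (c₀ * lam2 - θ) * b ^ 2 := by
      rw [hΨ]
      simp [Matrix.mulVec, dotProduct, Fin.sum_univ_two]
      field_simp
      ring
    rw [hv1, hv2] at h
    exact h
  -- assemble
  have hexpand : (xx - yy) ⬝ᵥ (R *ᵥ (bF xx) - R *ᵥ (bF yy) + c₀ • (bL *ᵥ (xx - yy)))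
      = (xbar - w) ⬝ᵥ FS + dzo ⬝ᵥ FS + (xbar - w) ⬝ᵥ FB + dzo ⬝ᵥ FB
        + c₀ * (z ⬝ᵥ (bL *ᵥ z)) := by
    have hdz : (fun k => z ((k, k) : Fin N × Fin N)) = (xbar - w) + dzo := by
      funext k
      have h := congrFun hzsplit (k, k)
      show z (k, k) = (xbar k - w k) + zo (k, k)
      rw [h]
      rfl
    rw [dotProduct_add, dotProduct_sub, dotProduct_smul, smul_eq_mul, hdR, hdR,
      ← dotProduct_sub]
    have hFsplit : bF xx - bF yy = FB + FS := by
      rw [hFB, hFS, hbFyy, ← hbFxc]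
      abel
    rw [hdz, hFsplit, add_dotProduct, dotProduct_add, dotProduct_add]
    ring
  rw [hexpand, show (xx - yy) ⬝ᵥ (xx - yy) = a ^ 2 + b ^ 2 from by
    rw [← hzdef, hpyth, ha2, hb2]]
  have hc0quad : c₀ * (lam2 * b ^ 2) ≤ c₀ * (z ⬝ᵥ (bL *ᵥ z)) := by
    apply mul_le_mul_of_nonneg_left _ hc₀.le
    rw [← hb2]; exact hquad
  have hsN : s ^ 2 = N := Real.sq_sqrt hNR.le
  have harith : (μ / N) * a ^ 2 - ((θ + θ₀) / s) * (a * b) + (c₀ * lam2 - θ) * b ^ 2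
      ≤ μ * ((a / s) ^ 2) + -(b * (θ₀ * (a / s))) + -((a / s) * (θ * b)) + -(b * (θ * b))
        + c₀ * (lam2 * b ^ 2) := by
    have h1 : (μ / N) * a ^ 2 = μ * ((a / s) ^ 2) := by
      rw [div_pow, hsN]; ring
    have h2 : ((θ + θ₀) / s) * (a * b) = b * (θ₀ * (a / s)) + (a / s) * (θ * b) := by
      field_simp; ring
    rw [h1, h2]
    exact le_of_eq (by ring)
  linarith [hB1, hB2, hB3, hB4, hray, hc0quad]
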